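/- Let 𝓗₂ ⊂ ℝ² be the lattice generated by (1,0) and (1/2,1/2). Then the ℓ¹-covering radius of 𝓗₂ equals 1/2, i.e., sup_{y∈ℝ²} inf_{x∈𝓗₂} ‖y − x‖₁ = 1/2. -/
import Mathlib


/-- The planar lattice generated by `(1,0)` and `(1/2,1/2)`. -/
def H2 : Set (ℝ × ℝ) := {p | ∃ a b : ℤ, p = ((a : ℝ) + (b : ℝ)/2, (b : ℝ)/2)}

/-- ℓ¹-distance from `y` to the set `H2`. -/
noncomputable def distH2 (y : ℝ × ℝ) : ℝ :=
  sInf ((fun p => |y.1 - p.1| + |y.2 - p.2|) '' H2)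

lemma H2_img_nonempty (y : ℝ × ℝ) :
    ((fun p => |y.1 - p.1| + |y.2 - p.2|) '' H2).Nonempty :=
  ⟨_, Set.mem_image_of_mem _ (show ((0:ℝ),(0:ℝ)) ∈ H2 from ⟨0, 0, by norm_num⟩)⟩

lemma H2_img_bddBelow (y : ℝ × ℝ) :
    BddBelow ((fun p => |y.1 - p.1| + |y.2 - p.2|) '' H2) :=
  ⟨0, by rintro r ⟨p, _, rfl⟩; positivity⟩

lemma distH2_le_half (y : ℝ × ℝ) : distH2 y ≤ 1/2 := by
  set a := round (y.1 - y.2) with ha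
  set b := round (y.1 + y.2) - a with hb
  have hmem : ((a:ℝ) + (b:ℝ)/2, (b:ℝ)/2) ∈ H2 := ⟨a, b, rfl⟩
  have hval : |y.1 - ((a:ℝ) + (b:ℝ)/2)| + |y.2 - (b:ℝ)/2| ≤ 1/2 := by
    have h1 : |y.1 - y.2 - (a:ℝ)| ≤ 1/2 := abs_sub_round _
    have h2 : |y.1 + y.2 - ((a:ℝ) + (b:ℝ))| ≤ 1/2 := by
      have h : ((a:ℝ) + (b:ℝ)) = ((round (y.1 + y.2) : ℤ) : ℝ) := by
        rw [hb]; push_cast; ring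
      rw [h]; exact abs_sub_round _
    rw [abs_le] at h1 h2
    rcases abs_cases (y.1 - ((a:ℝ) + (b:ℝ)/2)) with ⟨hx, _⟩ | ⟨hx, _⟩ <;>
      rcases abs_cases (y.2 - (b:ℝ)/2) with ⟨hy, _⟩ | ⟨hy, _⟩ <;>
        rw [hx, hy] <;> linarith [h1.1, h1.2, h2.1, h2.2]
  exact le_trans (csInf_le (H2_img_bddBelow y) (Set.mem_image_of_mem _ hmem)) hval

lemma half_le_abs (k : ℤ) : (1/2 : ℝ) ≤ |1/2 - (k:ℝ)| := by
  rcases le_or_gt k 0 with h | h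
  · have : (k:ℝ) ≤ 0 := by exact_mod_cast h
    rw [abs_of_nonneg (by linarith)]; linarith
  · have : (1:ℝ) ≤ (k:ℝ) := by exact_mod_cast h
    rw [abs_of_nonpos (by linarith)]; linarith

lemma half_le_distH2 : (1/2 : ℝ) ≤ distH2 (1/2, 0) := by
  apply le_csInf (H2_img_nonempty _)
  rintro r ⟨p, ⟨a, b, rfl⟩, rfl⟩
  simp only
  have h1 : |1/2 - ((a:ℝ) + (b:ℝ)/2)| + |(0:ℝ) - (b:ℝ)/2| ≥
      |1/2 - ((a:ℝ) + (b:ℝ))| := by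
    have := abs_add_le (1/2 - ((a:ℝ) + (b:ℝ)/2)) ((0:ℝ) - (b:ℝ)/2)
    have he : (1/2 - ((a:ℝ) + (b:ℝ)/2)) + ((0:ℝ) - (b:ℝ)/2) =
        1/2 - ((a:ℝ) + (b:ℝ)) := by ring
    rw [he] at this; linarith
  have h2 := half_le_abs (a + b)
  push_cast at h2
  linarith

theorem stmt8 : sSup (Set.range distH2) = 1/2 := by
  apply le_antisymm
  · apply csSup_le (Set.range_nonempty _)
    rintro r ⟨y, rfl⟩
    exact distH2_le_half y
  · refine le_trans half_le_distH2 (le_csSup ⟨1/2, ?_⟩ ⟨(1/2, 0), rfl⟩)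
    rintro r ⟨y, rfl⟩
    exact distH2_le_half y
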